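/- Let X be a separable complex Banach space, let (A, D(A)) be the generator of a C₀-semigroup on X with 0 ∈ ρ(A), and let X_{-1}^A be the extrapolation space of X with respect to A, i.e., the completion of X under ‖x‖_{-1} := ‖A^{-1}x‖. Define the operator (ℳ, D(ℳ)) on L^p(Ω,X) by (ℳf)(s) := A f(s) with D(ℳ) := L^p(Ω,D(A)) = {f ∈ L^p(Ω,X) : f(s) ∈ D(A) μ-a.e. and s ↦ A f(s) ∈ L^p(Ω,X)}. Then (L^p(Ω,X))_{-1}(ℳ) = L^p(Ω, X_{-1}^A); precisely, the natural inclusion ι : L^p(Ω,X) → L^p(Ω, X_{-1}^A) satisfies ‖ι(g)‖_{L^p(Ω,X_{-1}^A)} = ‖ℳ^{-1}g‖_{L^p(Ω,X)} for all g ∈ L^p(Ω,X) and has dense range, so the completion of L^p(Ω,X) with respect to f ↦ ‖ℳ^{-1}f‖_{L^p(Ω,X)} is isometrically isomorphic to the Bochner space L^p(Ω, X_{-1}^A) via the continuous extension of ι. -/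

import Mathlib

open MeasureTheory Filter
open scoped ENNReal NNReal

noncomputable section

/-- `R` is the resolvent operator of the (possibly unbounded) operator `A` at `lam`. -/
def IsResolvent {X : Type*} [NormedAddCommGroup X] [NormedSpace ℂ X]
    (A : X →ₗ.[ℂ] X) (lam : ℂ) (R : X →L[ℂ] X) : Prop :=
  ∃ hR : ∀ x : X, R x ∈ A.domain,
    (∀ x : X, lam • R x - A ⟨R x, hR x⟩ = x) ∧
    ∀ y : A.domain, R (lam • (y : X) - A y) = y

def InResolventSet {X : Type*} [NormedAddCommGroup X] [NormedSpace ℂ X]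
    (A : X →ₗ.[ℂ] X) (lam : ℂ) : Prop :=
  ∃ R : X →L[ℂ] X, IsResolvent A lam R

def IsBoundedInverse {X : Type*} [NormedAddCommGroup X] [NormedSpace ℂ X]
    (A : X →ₗ.[ℂ] X) (B : X →L[ℂ] X) : Prop :=
  ∃ hB : ∀ x : X, B x ∈ A.domain,
    (∀ x : X, A ⟨B x, hB x⟩ = x) ∧ ∀ y : A.domain, B (A y) = y

/-- `𝓜` is the operator-valued multiplication operator on `L^p(Ω,X)` with fibers `M s`. -/
def IsMulOp {Ω : Type*} [MeasurableSpace Ω] (μ : Measure Ω)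
    {X : Type*} [NormedAddCommGroup X] [NormedSpace ℂ X] (p : ℝ≥0∞) [Fact (1 ≤ p)]
    (M : Ω → X →ₗ.[ℂ] X) (𝓜 : Lp X p μ →ₗ.[ℂ] Lp X p μ) : Prop :=
  (∀ f : Lp X p μ, f ∈ 𝓜.domain ↔
    ∃ g : Lp X p μ, ∀ᵐ s ∂μ, ∃ h : f s ∈ (M s).domain, g s = M s ⟨f s, h⟩) ∧
  ∀ f : 𝓜.domain, ∀ᵐ s ∂μ, ∃ h : (f : Lp X p μ) s ∈ (M s).domain,
    (𝓜 f) s = M s ⟨(f : Lp X p μ) s, h⟩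

def IsC0Semigroup {Y : Type*} [NormedAddCommGroup Y] [NormedSpace ℂ Y]
    (T : ℝ → Y →L[ℂ] Y) : Prop :=
  T 0 = 1 ∧ (∀ t r : ℝ, 0 ≤ t → 0 ≤ r → T (t + r) = T t ∘L T r) ∧
  ∀ y : Y, ContinuousOn (fun t => T t y) (Set.Ici (0 : ℝ))

def IsGenerator {Y : Type*} [NormedAddCommGroup Y] [NormedSpace ℂ Y]
    (T : ℝ → Y →L[ℂ] Y) (A : Y →ₗ.[ℂ] Y) : Prop :=
  (∀ y : Y, y ∈ A.domain ↔
    ∃ z : Y, Tendsto (fun t : ℝ => t⁻¹ • (T t y - y)) (nhdsWithin 0 (Set.Ioi 0)) (nhds z)) ∧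
  ∀ y : A.domain, Tendsto (fun t : ℝ => t⁻¹ • (T t (y : Y) - (y : Y)))
    (nhdsWithin 0 (Set.Ioi 0)) (nhds (A y))

/-- (Corollary) For a single generator `(A, D(A))` of a `C₀`-semigroup on a
separable Banach space `X` with `0 ∈ ρ(A)`, and the constant-fiber multiplication operator
`(ℳf)(s) = A f(s)` on `L^p(Ω,X)`, the extrapolation space `(L^p(Ω,X))_{-1}(ℳ)` equals the
Bochner space `L^p(Ω, X_{-1}^A)`: the natural inclusion `ι : L^p(Ω,X) → L^p(Ω,X_{-1}^A)` is
well defined, satisfies `‖ι(g)‖ = ‖ℳ⁻¹g‖_{L^p(Ω,X)}`, and has dense range, so the completion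
of `L^p(Ω,X)` with respect to `f ↦ ‖ℳ⁻¹f‖` is isometrically isomorphic to `L^p(Ω,X_{-1}^A)`
via the continuous extension of `ι`. -/
theorem constant_fiber_extrapolation_space_eq_bochner_space
    {Ω : Type*} [MeasurableSpace Ω] {μ : Measure Ω} [SigmaFinite μ]
    {X : Type*} [NormedAddCommGroup X] [NormedSpace ℂ X] [CompleteSpace X]
    [TopologicalSpace.SeparableSpace X]
    {p : ℝ≥0∞} [Fact (1 ≤ p)] (hp : p ≠ ∞)
    -- `A` generates a `C₀`-semigroup on `X` and `0 ∈ ρ(A)`, with inverse `Ainv = A⁻¹`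
    (A : X →ₗ.[ℂ] X)
    (T : ℝ → X →L[ℂ] X) (hT : IsC0Semigroup T) (hgen : IsGenerator T A)
    (Ainv : X →L[ℂ] X) (hAinv : IsBoundedInverse A Ainv)
    -- the extrapolation space `X_{-1}^A`: completion of `X` w.r.t. `‖x‖_{-1} = ‖A⁻¹x‖`
    (Xm1 : Type*) [NormedAddCommGroup Xm1] [NormedSpace ℂ Xm1] [CompleteSpace Xm1]
    (j : X →L[ℂ] Xm1) (hjiso : ∀ x : X, ‖j x‖ = ‖Ainv x‖) (hjdense : DenseRange j)
    -- the constant-fiber multiplication operator `ℳ`, with `ℳ⁻¹ = Rinv` acting as `A⁻¹` fiberwise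
    (𝓜 : Lp X p μ →ₗ.[ℂ] Lp X p μ) (hMul : IsMulOp μ p (fun _ : Ω => A) 𝓜)
    (Rinv : Lp X p μ →L[ℂ] Lp X p μ) (hRinv : IsBoundedInverse 𝓜 Rinv)
    (hRrep : ∀ f : Lp X p μ, ∀ᵐ s ∂μ, (Rinv f) s = Ainv (f s)) :
    -- `ι` is well defined into the Bochner space `L^p(Ω,X_{-1}^A)` …
    (∀ g : Lp X p μ, MemLp (fun s => j (g s)) p μ) ∧
    -- … it is isometric for the extrapolation norm: `‖ι(g)‖ = ‖ℳ⁻¹g‖_{L^p(Ω,X)}` …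
    (∀ g : Lp X p μ, eLpNorm (fun s => j (g s)) p μ = eLpNorm (⇑(Rinv g)) p μ) ∧
    -- … and it has dense range in `L^p(Ω,X_{-1}^A)`
    ∀ F : Lp Xm1 p μ, ∀ ε : ℝ, 0 < ε → ∃ g : Lp X p μ,
      eLpNorm (fun s => F s - j (g s)) p μ < ENNReal.ofReal ε := by
  have hmem : ∀ g : Lp X p μ, MemLp (fun s => j (g s)) p μ := fun g =>
    j.comp_memLp' (Lp.memLp g)
  refine ⟨hmem, ?_, ?_⟩
  · intro g
    refine eLpNorm_congr_norm_ae ?_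
    filter_upwards [hRrep g] with s hs
    rw [hs, hjiso]
  · -- density
    set L : Lp X p μ →L[ℂ] Lp Xm1 p μ := j.compLpL p μ with hL
    set R : Submodule ℂ (Lp Xm1 p μ) :=
      LinearMap.range (L : Lp X p μ →ₗ[ℂ] Lp Xm1 p μ) with hR
    have hLapp : ∀ g : Lp X p μ, L g =ᵐ[μ] fun a => j (g a) := fun g =>
      j.coeFn_compLpL g
    have hall : ∀ F : Lp Xm1 p μ, F ∈ R.topologicalClosure := by
      refine Lp.induction hp _ ?_ ?_ ?_
      · intro c s hs hμs
        rw [Lp.simpleFunc.coe_indicatorConst]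
        have : indicatorConstLp p hs hμs.ne c ∈ closure (R : Set (Lp Xm1 p μ)) := by
          rw [Metric.mem_closure_iff]
          intro ε hε
          set C : ℝ := (μ s).toReal ^ (1 / p.toReal) + 1 with hC
          have hC0 : 0 < C := by positivity
          obtain ⟨x, hx⟩ := hjdense.exists_dist_lt c (div_pos hε hC0)
          refine ⟨L (indicatorConstLp p hs hμs.ne x), ⟨_, rfl⟩, ?_⟩
          have heq : L (indicatorConstLp p hs hμs.ne x) = indicatorConstLp p hs hμs.ne (j x) := by
            refine Lp.ext ?_
            filter_upwards [hLapp (indicatorConstLp p hs hμs.ne x),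
              indicatorConstLp_coeFn (p := p) (hs := hs) (hμs := hμs.ne) (c := x),
              indicatorConstLp_coeFn (p := p) (hs := hs) (hμs := hμs.ne) (c := j x)]
              with a h1 h2 h3
            rw [h1, h2, h3]
            simp only [Set.indicator]
            split_ifs <;> simp
          rw [heq, dist_eq_norm, indicatorConstLp_sub]
          have hle : ‖indicatorConstLp p hs hμs.ne (c - j x)‖ ≤
              ‖c - j x‖ * (μ s).toReal ^ (1 / p.toReal) := norm_indicatorConstLp_le
          have h1 : ‖c - j x‖ < ε / C := by rwa [← dist_eq_norm]
          have h2 : (μ s).toReal ^ (1 / p.toReal) ≤ C := by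
            rw [hC]; linarith
          calc ‖indicatorConstLp p hs hμs.ne (c - j x)‖
              ≤ ‖c - j x‖ * (μ s).toReal ^ (1 / p.toReal) := hle
            _ ≤ ‖c - j x‖ * C := mul_le_mul_of_nonneg_left h2 (norm_nonneg _)
            _ < (ε / C) * C := mul_lt_mul_of_pos_right h1 hC0
            _ = ε := div_mul_cancel₀ ε hC0.ne'
        exact this
      · intro f g hf hg _ hPf hPg
        exact R.topologicalClosure.add_mem hPf hPg
      · exact R.isClosed_topologicalClosure
    intro F ε hε
    have hF : F ∈ closure (R : Set (Lp Xm1 p μ)) := hall F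
    obtain ⟨G, hG, hdist⟩ := Metric.mem_closure_iff.mp hF ε hε
    obtain ⟨g, rfl⟩ := hG
    refine ⟨g, ?_⟩
    have hcongr : eLpNorm (fun s => F s - j (g s)) p μ = eLpNorm (⇑(F - L g)) p μ := by
      refine eLpNorm_congr_ae ?_
      filter_upwards [Lp.coeFn_sub F (L g), hLapp g] with a h1 h2
      rw [h1, Pi.sub_apply, h2]
    rw [hcongr]
    rw [ENNReal.lt_ofReal_iff_toReal_lt (Lp.eLpNorm_ne_top _)]
    rw [← Lp.norm_def, ← dist_eq_norm]
    exact hdist
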